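/- Let A be a Banach algebra over ℂ and let A# = A ⊕ ℂ1 be its unitization, the unital Banach algebra of pairs a + λ1 (a ∈ A, λ ∈ ℂ) with product (a + λ1)(b + μ1) = (ab + λb + μa) + λμ1 and norm ‖a + λ1‖ = ‖a‖ + |λ|. Then A is ideally amenable if and only if A# is ideally amenable. -/

import Mathlib

open Unitization ContinuousLinearMap

section Aux

variable {A : Type*} [NonUnitalNormedRing A] [NormedSpace ℂ A]
  [IsScalarTower ℂ A A] [SMulCommClass ℂ A A]

local notation "𝔅" => WithLp 1 (Unitization ℂ A)

/-- The identity linear equivalence between `WithLp 1 (Unitization ℂ A)` and `Unitization ℂ A`. -/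
noncomputable def uE : 𝔅 ≃ₗ[ℂ] Unitization ℂ A := WithLp.linearEquiv 1 ℂ _

@[simp] lemma uE_mul (x y : 𝔅) : uE (x * y) = uE x * uE y := rfl
@[simp] lemma uE_one : uE (1 : 𝔅) = 1 := rfl

/-- The scalar part, as a continuous linear map. -/
noncomputable def fstC : 𝔅 →L[ℂ] ℂ :=
  LinearMap.mkContinuous ((Unitization.fstHom ℂ A).toLinearMap ∘ₗ (uE (A := A)).toLinearMap) 1
    (fun x => by
      rw [one_mul, WithLp.unitization_norm_def]
      exact le_add_of_nonneg_right (norm_nonneg _))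

@[simp] lemma fstC_apply (x : 𝔅) : fstC x = (uE x).fst := rfl

/-- The `A` part, as a continuous linear map. -/
noncomputable def sndC : 𝔅 →L[ℂ] A :=
  LinearMap.mkContinuous ((Unitization.sndHom ℂ ℂ A) ∘ₗ (uE (A := A)).toLinearMap) 1
    (fun x => by
      rw [one_mul, WithLp.unitization_norm_def]
      exact le_add_of_nonneg_left (norm_nonneg _))

@[simp] lemma sndC_apply (x : 𝔅) : sndC x = (uE x).snd := rfl

/-- The inclusion of `A`, as a continuous linear map. -/
noncomputable def inrC : A →L[ℂ] 𝔅 :=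
  LinearMap.mkContinuous ((uE (A := A)).symm.toLinearMap ∘ₗ (Unitization.inrHom ℂ ℂ A)) 1
    (fun a => by rw [one_mul]; exact (WithLp.unitization_norm_inr a).le)

@[simp] lemma uE_inrC (a : A) : uE (inrC a) = (a : Unitization ℂ A) := by
  simp [inrC, uE]

@[simp] lemma fstC_inrC (a : A) : fstC (inrC a) = 0 := by simp
@[simp] lemma sndC_inrC (a : A) : sndC (inrC a) = a := by simp

@[simp] lemma fstC_one : fstC (1 : 𝔅) = 1 := by simp
@[simp] lemma sndC_one : sndC (1 : 𝔅) = 0 := by simp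

lemma fstC_mul (x y : 𝔅) : fstC (x * y) = fstC x * fstC y := by
  simp [Unitization.fst_mul]

lemma sndC_mul (x y : 𝔅) : sndC (x * y) = fstC x • sndC y + fstC y • sndC x + sndC x * sndC y := by
  simp [Unitization.snd_mul]

lemma inrC_mul (a b : A) : inrC (a * b) = inrC a * inrC b := by
  apply (uE (A := A)).injective
  simp [Unitization.inr_mul]

lemma inrC_eq_of_fstC_eq_zero {x : 𝔅} (h : fstC x = 0) : inrC (sndC x) = x := by
  apply (uE (A := A)).injective
  rw [uE_inrC, sndC_apply]
  conv_rhs => rw [← Unitization.inl_fst_add_inr_snd_eq (uE x)]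
  rw [show (uE x).fst = 0 from h, Unitization.inl_zero, zero_add]

lemma decompC (x : 𝔅) : x = inrC (sndC x) + fstC x • 1 := by
  apply (uE (A := A)).injective
  rw [map_add, map_smul, uE_inrC, uE_one, sndC_apply, fstC_apply]
  conv_lhs => rw [← Unitization.inl_fst_add_inr_snd_eq (uE x)]
  rw [← Unitization.algebraMap_eq_inl, Algebra.algebraMap_eq_smul_one]
  exact add_comm _ _

/-- If `A` is `A`-weakly amenable (in the explicit sense below), then every continuous
linear functional on `A` vanishing on products vanishes. -/
lemma funct_vanish
    (h : ∀ I : Submodule ℂ A, IsClosed (I : Set A) →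
      ∀ hI : (∀ a : A, ∀ x ∈ I, a * x ∈ I ∧ x * a ∈ I),
      ∀ D : A →L[ℂ] (↥I →L[ℂ] ℂ),
        (∀ a b : A, ∀ i : ↥I,
          D (a * b) i = D b ⟨(i : A) * a, (hI a i i.2).2⟩ +
            D a ⟨b * (i : A), (hI b i i.2).1⟩) →
        ∃ f : ↥I →L[ℂ] ℂ, ∀ a : A, ∀ i : ↥I,
          D a i = f ⟨(i : A) * a - a * (i : A),
            I.sub_mem (hI a i i.2).2 (hI a i i.2).1⟩)
    (ψ : A →L[ℂ] ℂ) (hψ : ∀ a b : A, ψ (a * b) = 0) : ψ = 0 := by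
  have htop : ∀ a : A, ∀ x ∈ (⊤ : Submodule ℂ A), a * x ∈ (⊤ : Submodule ℂ A) ∧
      x * a ∈ (⊤ : Submodule ℂ A) := fun _ _ _ => ⟨trivial, trivial⟩
  obtain ⟨f, hf⟩ := h ⊤ (by rw [Submodule.top_coe]; exact isClosed_univ) htop
    (ψ.smulRight (ψ.comp (⊤ : Submodule ℂ A).subtypeL))
    (by intro a b i; simp [hψ])
  ext a
  have h1 := hf a ⟨a, trivial⟩
  simp only [ContinuousLinearMap.smulRight_apply, ContinuousLinearMap.comp_apply,
    Submodule.subtypeL_apply, smul_eq_mul] at h1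
  have h2 : (⟨a * a - a * a, (⊤ : Submodule ℂ A).sub_mem (htop a a trivial).2
      (htop a a trivial).1⟩ : ↥(⊤ : Submodule ℂ A)) = 0 :=
    Subtype.ext (sub_self _)
  rw [h2, map_zero] at h1
  simpa [mul_self_eq_zero] using h1

/-- Transfer a map into a dual space along `T` (inner) and `v` (precomposition). -/
noncomputable def transferDer {X Y P Q : Type*} [NormedAddCommGroup X] [NormedSpace ℂ X]
    [NormedAddCommGroup Y] [NormedSpace ℂ Y] [NormedAddCommGroup P] [NormedSpace ℂ P]
    [NormedAddCommGroup Q] [NormedSpace ℂ Q]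
    (D : Y →L[ℂ] (P →L[ℂ] ℂ)) (T : X →L[ℂ] Y) (v : Q →L[ℂ] P) : X →L[ℂ] (Q →L[ℂ] ℂ) :=
  LinearMap.mkContinuous
    { toFun := fun x => (D (T x)).comp v
      map_add' := fun x y => by
        show (D (T (x + y))).comp v = (D (T x)).comp v + (D (T y)).comp v
        rw [map_add, map_add, ContinuousLinearMap.add_comp]
      map_smul' := fun c x => by
        show (D (T (c • x))).comp v = c • (D (T x)).comp v
        rw [map_smul, map_smul, ContinuousLinearMap.smul_comp] }
    (‖D‖ * ‖T‖ * ‖v‖)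
    (fun x => by
      calc ‖(D (T x)).comp v‖ ≤ ‖D (T x)‖ * ‖v‖ := ContinuousLinearMap.opNorm_comp_le _ _
        _ ≤ (‖D‖ * ‖T x‖) * ‖v‖ := by
              gcongr
              exact ContinuousLinearMap.le_opNorm D (T x)
        _ ≤ (‖D‖ * (‖T‖ * ‖x‖)) * ‖v‖ := by
              gcongr
              exact ContinuousLinearMap.le_opNorm T x
        _ = ‖D‖ * ‖T‖ * ‖v‖ * ‖x‖ := by ring)

@[simp] lemma transferDer_apply {X Y P Q : Type*} [NormedAddCommGroup X] [NormedSpace ℂ X]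
    [NormedAddCommGroup Y] [NormedSpace ℂ Y] [NormedAddCommGroup P] [NormedSpace ℂ P]
    [NormedAddCommGroup Q] [NormedSpace ℂ Q]
    (D : Y →L[ℂ] (P →L[ℂ] ℂ)) (T : X →L[ℂ] Y) (v : Q →L[ℂ] P) (x : X) (q : Q) :
    transferDer D T v x q = D (T x) (v q) := rfl

end Aux

set_option maxHeartbeats 4000000 in
set_option synthInstance.maxHeartbeats 1000000 in
theorem ideallyAmenable_iff_unitization_ideallyAmenable
    {A : Type*} [NonUnitalNormedRing A] [NormedSpace ℂ A]
    [IsScalarTower ℂ A A] [SMulCommClass ℂ A A] [CompleteSpace A] :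
    -- `A` is ideally amenable
    (∀ I : Submodule ℂ A, IsClosed (I : Set A) →
      ∀ hI : (∀ a : A, ∀ x ∈ I, a * x ∈ I ∧ x * a ∈ I),
      ∀ D : A →L[ℂ] (↥I →L[ℂ] ℂ),
        (∀ a b : A, ∀ i : ↥I,
          D (a * b) i = D b ⟨(i : A) * a, (hI a i i.2).2⟩ +
            D a ⟨b * (i : A), (hI b i i.2).1⟩) →
        ∃ f : ↥I →L[ℂ] ℂ, ∀ a : A, ∀ i : ↥I,
          D a i = f ⟨(i : A) * a - a * (i : A),
            I.sub_mem (hI a i i.2).2 (hI a i i.2).1⟩) ↔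
    -- `A#` is ideally amenable
    (∀ I : Submodule ℂ (WithLp 1 (Unitization ℂ A)),
      IsClosed (I : Set (WithLp 1 (Unitization ℂ A))) →
      ∀ hI : (∀ a : WithLp 1 (Unitization ℂ A), ∀ x ∈ I, a * x ∈ I ∧ x * a ∈ I),
      ∀ D : (WithLp 1 (Unitization ℂ A)) →L[ℂ] (↥I →L[ℂ] ℂ),
        (∀ a b : WithLp 1 (Unitization ℂ A), ∀ i : ↥I,
          D (a * b) i = D b ⟨(i : WithLp 1 (Unitization ℂ A)) * a, (hI a i i.2).2⟩ +
            D a ⟨b * (i : WithLp 1 (Unitization ℂ A)), (hI b i i.2).1⟩) →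
        ∃ f : ↥I →L[ℂ] ℂ, ∀ a : WithLp 1 (Unitization ℂ A), ∀ i : ↥I,
          D a i = f ⟨(i : WithLp 1 (Unitization ℂ A)) * a - a * (i : WithLp 1 (Unitization ℂ A)),
            I.sub_mem (hI a i i.2).2 (hI a i i.2).1⟩) := by
  constructor
  · -- A ideally amenable → A# ideally amenable
    intro h I hIc hI D hD
    -- the derivation kills the identity
    have hD1 : D 1 = 0 := by
      ext i
      have h11 := hD 1 1 i
      rw [one_mul] at h11
      have e1 : (⟨(i : WithLp 1 (Unitization ℂ A)) * 1, (hI 1 i i.2).2⟩ : ↥I) = i :=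
        Subtype.ext (mul_one _)
      have e2 : (⟨(1 : WithLp 1 (Unitization ℂ A)) * (i : WithLp 1 (Unitization ℂ A)),
          (hI 1 i i.2).1⟩ : ↥I) = i := Subtype.ext (one_mul _)
      rw [e1, e2] at h11
      have h0 := right_eq_add.mp h11
      simpa using h0
    have hDx : ∀ x : WithLp 1 (Unitization ℂ A), D x = D (inrC (sndC x)) := by
      intro x
      conv_lhs => rw [decompC x]
      rw [map_add, map_smul, hD1]
      ext i
      simp
    -- J = I ∩ A, a closed ideal of A
    set J : Submodule ℂ A := I.comap inrC.toLinearMap with hJdef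
    have hJmem : ∀ a : A, a ∈ J ↔ inrC a ∈ I := fun a => Iff.rfl
    have hJc : IsClosed (J : Set A) := by
      have hset : (J : Set A) = inrC ⁻¹' I := rfl
      rw [hset]
      exact hIc.preimage inrC.continuous
    have hJideal : ∀ a : A, ∀ x ∈ J, a * x ∈ J ∧ x * a ∈ J := by
      intro a x hx
      constructor
      · show inrC (a * x) ∈ I
        rw [inrC_mul]
        exact (hI (inrC a) _ hx).1
      · show inrC (x * a) ∈ I
        rw [inrC_mul]
        exact (hI (inrC a) _ hx).2
    set u : ↥J →L[ℂ] ↥I := (inrC.comp J.subtypeL).codRestrict I (fun j => j.2) with hudef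
    set DJ : A →L[ℂ] (↥J →L[ℂ] ℂ) := transferDer D inrC u with hDJdef
    have hDJ : ∀ a b : A, ∀ j : ↥J, DJ (a * b) j =
        DJ b ⟨(j : A) * a, (hJideal a j j.2).2⟩ + DJ a ⟨b * (j : A), (hJideal b j j.2).1⟩ := by
      intro a b j
      simp only [hDJdef, transferDer_apply]
      rw [inrC_mul]
      have e1 : u ⟨(j : A) * a, (hJideal a j j.2).2⟩ =
          ⟨(u j : WithLp 1 (Unitization ℂ A)) * inrC a, (hI (inrC a) (u j) (u j).2).2⟩ :=
        Subtype.ext (inrC_mul _ _)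
      have e2 : u ⟨b * (j : A), (hJideal b j j.2).1⟩ =
          ⟨inrC b * (u j : WithLp 1 (Unitization ℂ A)), (hI (inrC b) (u j) (u j).2).1⟩ :=
        Subtype.ext (inrC_mul _ _)
      rw [e1, e2]
      exact hD (inrC a) (inrC b) (u j)
    obtain ⟨g, hg⟩ := h J hJc hJideal DJ hDJ
    have hDval : ∀ (b : A) (z : ↥I) (j : ↥J), inrC (j : A) = (z : WithLp 1 (Unitization ℂ A)) →
        D (inrC b) z = g ⟨(j : A) * b - b * (j : A),
          J.sub_mem (hJideal b j j.2).2 (hJideal b j j.2).1⟩ := by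
      intro b z j hj
      have h1 : u j = z := Subtype.ext hj
      rw [← h1]
      exact hg b j
    by_cases hA : ∀ i ∈ I, fstC i = 0
    · -- Case 1 : I ⊆ A
      set w1 : ↥I →L[ℂ] ↥J := (sndC.comp I.subtypeL).codRestrict J
        (fun i => show inrC (sndC (i : WithLp 1 (Unitization ℂ A))) ∈ I by
          rw [inrC_eq_of_fstC_eq_zero (hA _ i.2)]; exact i.2) with hw1def
      refine ⟨g.comp w1, ?_⟩
      intro x i
      rw [hDx x]
      have hui : inrC ((w1 i : A)) = (i : WithLp 1 (Unitization ℂ A)) := by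
        show inrC (sndC (i : WithLp 1 (Unitization ℂ A))) = (i : WithLp 1 (Unitization ℂ A))
        exact inrC_eq_of_fstC_eq_zero (hA _ i.2)
      rw [hDval (sndC x) i (w1 i) hui]
      rw [ContinuousLinearMap.comp_apply]
      congr 1
      apply Subtype.ext
      show sndC (i : WithLp 1 (Unitization ℂ A)) * sndC x -
          sndC x * sndC (i : WithLp 1 (Unitization ℂ A)) =
        sndC ((i : WithLp 1 (Unitization ℂ A)) * x - x * (i : WithLp 1 (Unitization ℂ A)))
      rw [map_sub, sndC_mul, sndC_mul, hA _ i.2]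
      simp
    · -- Case 2 : I contains an element with nonzero scalar part
      push_neg at hA
      obtain ⟨i₀, hi₀I, hi₀⟩ := hA
      set e : WithLp 1 (Unitization ℂ A) := (fstC i₀)⁻¹ • i₀ with hedef
      have he : e ∈ I := I.smul_mem _ hi₀I
      have hfe : fstC e = 1 := by
        rw [hedef, map_smul, smul_eq_mul]
        exact inv_mul_cancel₀ hi₀
      set s : A := sndC e with hsdef
      set eI : ↥I := (⟨e, he⟩ : ↥I) with heIdef
      have hfst_e_inr : ∀ a : A, fstC (e * inrC a) = 0 := fun a => by
        rw [fstC_mul]; simp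
      have hfst_inr_e : ∀ a : A, fstC (inrC a * e) = 0 := fun a => by
        rw [fstC_mul]; simp
      have hsnd_e_inr : ∀ a : A, sndC (e * inrC a) = a + s * a := fun a => by
        rw [sndC_mul, hfe]; simp [hsdef]
      have hsnd_inr_e : ∀ a : A, sndC (inrC a * e) = a + a * s := fun a => by
        rw [sndC_mul, hfe]; simp [hsdef]
      have hJ_e_inr : ∀ a : A, a + s * a ∈ J := by
        intro a
        show inrC _ ∈ I
        rw [← hsnd_e_inr a, inrC_eq_of_fstC_eq_zero (hfst_e_inr a)]
        exact (hI (inrC a) e he).2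
      have hJ_inr_e : ∀ a : A, a + a * s ∈ J := by
        intro a
        show inrC _ ∈ I
        rw [← hsnd_inr_e a, inrC_eq_of_fstC_eq_zero (hfst_inr_e a)]
        exact (hI (inrC a) e he).1
      have hcommMem : ∀ a : A, s * a - a * s ∈ J := by
        intro a
        have hrw : s * a - a * s = (a + s * a) - (a + a * s) := by abel
        rw [hrw]
        exact J.sub_mem (hJ_e_inr a) (hJ_inr_e a)
      set commL : A →L[ℂ] ↥J :=
        ((ContinuousLinearMap.mul ℂ A s) - (ContinuousLinearMap.mul ℂ A).flip s).codRestrict J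
          (fun a => by simpa using hcommMem a) with hcommLdef
      have hcommLval : ∀ a : A, (commL a : A) = s * a - a * s := fun a => by
        simp [hcommLdef]
      set ψ : A →L[ℂ] ℂ := (D.comp inrC).flip eI - g.comp commL with hψdef
      have hψapply : ∀ a : A, ψ a = D (inrC a) eI - g (commL a) := fun a => rfl
      have hψmul : ∀ a b : A, ψ (a * b) = 0 := by
        intro a b
        rw [hψapply, inrC_mul]
        rw [hD (inrC a) (inrC b) eI]
        simp only [hDval b ⟨(eI : WithLp 1 (Unitization ℂ A)) * inrC a, (hI (inrC a) eI eI.2).2⟩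
          ⟨a + s * a, hJ_e_inr a⟩
          (by show inrC (a + s * a) = e * inrC a
              rw [← hsnd_e_inr a]
              exact inrC_eq_of_fstC_eq_zero (hfst_e_inr a))]
        simp only [hDval a ⟨inrC b * (eI : WithLp 1 (Unitization ℂ A)), (hI (inrC b) eI eI.2).1⟩
          ⟨b + b * s, hJ_inr_e b⟩
          (by show inrC (b + b * s) = inrC b * e
              rw [← hsnd_inr_e b]
              exact inrC_eq_of_fstC_eq_zero (hfst_inr_e b))]
        have hcval : commL (a * b) = ⟨s * (a * b) - (a * b) * s, hcommMem (a * b)⟩ :=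
          Subtype.ext (hcommLval _)
        rw [hcval, ← map_add g, ← map_sub g]
        convert map_zero g using 2
        apply Subtype.ext
        show ((a + s * a) * b - b * (a + s * a)) + ((b + b * s) * a - a * (b + b * s)) -
          (s * (a * b) - (a * b) * s) = 0
        noncomm_ring
      have hψ0 : ψ = 0 := funct_vanish h ψ hψmul
      have hφ : ∀ a : A, D (inrC a) eI = g (commL a) := by
        intro a
        have h0 := ContinuousLinearMap.ext_iff.mp hψ0 a
        rw [hψapply] at h0
        exact sub_eq_zero.mp (by simpa using h0)
      -- the implementing functional
      have hfz : ∀ i : ↥I, fstC ((i : WithLp 1 (Unitization ℂ A)) -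
          fstC (i : WithLp 1 (Unitization ℂ A)) • e) = 0 := by
        intro i
        rw [map_sub, map_smul, hfe, smul_eq_mul, mul_one, sub_self]
      have hw2mem : ∀ i : ↥I, sndC ((i : WithLp 1 (Unitization ℂ A)) -
          fstC (i : WithLp 1 (Unitization ℂ A)) • e) ∈ J := by
        intro i
        show inrC _ ∈ I
        rw [inrC_eq_of_fstC_eq_zero (hfz i)]
        exact I.sub_mem i.2 (I.smul_mem _ he)
      set w2 : ↥I →L[ℂ] ↥J :=
        (sndC.comp (I.subtypeL - (fstC.comp I.subtypeL).smulRight e)).codRestrict J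
          (fun i => hw2mem i) with hw2def
      have hw2val : ∀ i : ↥I, (w2 i : A) = sndC ((i : WithLp 1 (Unitization ℂ A)) -
          fstC (i : WithLp 1 (Unitization ℂ A)) • e) := fun i => rfl
      refine ⟨g.comp w2, ?_⟩
      intro x i
      rw [hDx x]
      have hmem2 : inrC ((w2 i : A)) ∈ I := by
        rw [hw2val, inrC_eq_of_fstC_eq_zero (hfz i)]
        exact I.sub_mem i.2 (I.smul_mem _ he)
      have hidecomp : i = (⟨inrC ((w2 i : A)), hmem2⟩ : ↥I) +
          fstC (i : WithLp 1 (Unitization ℂ A)) • eI := by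
        apply Subtype.ext
        show (i : WithLp 1 (Unitization ℂ A)) = inrC ((w2 i : A)) +
          fstC (i : WithLp 1 (Unitization ℂ A)) • e
        rw [hw2val, inrC_eq_of_fstC_eq_zero (hfz i), sub_add_cancel]
      have hLHS : D (inrC (sndC x)) i = g ⟨(w2 i : A) * sndC x - sndC x * (w2 i : A),
          J.sub_mem (hJideal (sndC x) (w2 i : A) (w2 i).2).2
            (hJideal (sndC x) (w2 i : A) (w2 i).2).1⟩ +
          fstC (i : WithLp 1 (Unitization ℂ A)) * g (commL (sndC x)) := by
        conv_lhs => rw [hidecomp]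
        rw [map_add, map_smul]
        rw [hDval (sndC x) ⟨inrC ((w2 i : A)), hmem2⟩ (w2 i) rfl, hφ (sndC x)]
        rw [smul_eq_mul]
      rw [hLHS, ContinuousLinearMap.comp_apply]
      have hsndi : sndC (i : WithLp 1 (Unitization ℂ A)) =
          (w2 i : A) + fstC (i : WithLp 1 (Unitization ℂ A)) • s := by
        rw [hw2val, map_sub, map_smul]
        exact (sub_add_cancel _ _).symm
      have hw2arg : w2 ⟨(i : WithLp 1 (Unitization ℂ A)) * x -
            x * (i : WithLp 1 (Unitization ℂ A)), I.sub_mem (hI x i i.2).2 (hI x i i.2).1⟩ =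
          (⟨(w2 i : A) * sndC x - sndC x * (w2 i : A),
            J.sub_mem (hJideal (sndC x) (w2 i : A) (w2 i).2).2
              (hJideal (sndC x) (w2 i : A) (w2 i).2).1⟩ : ↥J) +
            fstC (i : WithLp 1 (Unitization ℂ A)) • commL (sndC x) := by
        apply Subtype.ext
        have hf0 : fstC ((i : WithLp 1 (Unitization ℂ A)) * x -
            x * (i : WithLp 1 (Unitization ℂ A))) = 0 := by
          rw [map_sub, fstC_mul, fstC_mul, mul_comm, sub_self]
        show sndC (((i : WithLp 1 (Unitization ℂ A)) * x - x * (i : WithLp 1 (Unitization ℂ A))) -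
            fstC ((i : WithLp 1 (Unitization ℂ A)) * x - x * (i : WithLp 1 (Unitization ℂ A))) • e) = _
        rw [hf0, zero_smul, sub_zero, map_sub, sndC_mul, sndC_mul, hsndi]
        show _ = ((w2 i : A) * sndC x - sndC x * (w2 i : A)) +
          fstC (i : WithLp 1 (Unitization ℂ A)) • (s * sndC x - sndC x * s)
        simp only [add_mul, mul_add, smul_mul_assoc, mul_smul_comm, smul_sub, smul_add]
        abel
      rw [hw2arg, map_add, map_smul, smul_eq_mul]

  · -- A# ideally amenable → A ideally amenable
    intro h I hIc hI D hD
    -- the corresponding ideal of the unitization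
    set I' : Submodule ℂ (WithLp 1 (Unitization ℂ A)) :=
      I.comap sndC.toLinearMap ⊓ LinearMap.ker (fstC (A := A)).toLinearMap with hI'def
    have hmem : ∀ x : WithLp 1 (Unitization ℂ A), x ∈ I' ↔ sndC x ∈ I ∧ fstC x = 0 := by
      intro x
      simp [hI'def, Submodule.mem_inf, Submodule.mem_comap, LinearMap.mem_ker]
    clear_value I'
    have hI'c : IsClosed (I' : Set (WithLp 1 (Unitization ℂ A))) := by
      have : (I' : Set (WithLp 1 (Unitization ℂ A))) = sndC ⁻¹' I ∩ fstC ⁻¹' {0} := by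
        ext x
        simpa using hmem x
      rw [this]
      exact (hIc.preimage sndC.continuous).inter (isClosed_singleton.preimage fstC.continuous)
    have hI'ideal : ∀ a : WithLp 1 (Unitization ℂ A), ∀ x ∈ I', a * x ∈ I' ∧ x * a ∈ I' := by
      intro a x hx
      obtain ⟨h1, h2⟩ := (hmem x).mp hx
      constructor
      · refine (hmem _).mpr ⟨?_, ?_⟩
        · rw [sndC_mul, h2]
          simpa using add_mem (I.smul_mem _ h1) (hI (sndC a) _ h1).1
        · rw [fstC_mul, h2, mul_zero]
      · refine (hmem _).mpr ⟨?_, ?_⟩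
        · rw [sndC_mul, h2]
          simpa using add_mem (I.smul_mem _ h1) (hI (sndC a) _ h1).2
        · rw [fstC_mul, h2, zero_mul]
    -- transfer the derivation
    set v : ↥I' →L[ℂ] ↥I :=
      (sndC.comp I'.subtypeL).codRestrict I (fun i => ((hmem _).mp i.2).1) with hvdef
    set D' : (WithLp 1 (Unitization ℂ A)) →L[ℂ] (↥I' →L[ℂ] ℂ) :=
      transferDer D sndC v with hD'def
    have hD'apply : ∀ (x : WithLp 1 (Unitization ℂ A)) (i : ↥I'), D' x i = D (sndC x) (v i) :=
      fun x i => rfl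
    have hvval : ∀ i : ↥I', (v i : A) = sndC (i : WithLp 1 (Unitization ℂ A)) := fun i => rfl
    have hD' : ∀ x y : WithLp 1 (Unitization ℂ A), ∀ i : ↥I',
        D' (x * y) i = D' y ⟨(i : WithLp 1 (Unitization ℂ A)) * x, (hI'ideal x i i.2).2⟩ +
          D' x ⟨y * (i : WithLp 1 (Unitization ℂ A)), (hI'ideal y i i.2).1⟩ := by
      intro x y i
      have hfsti : fstC (i : WithLp 1 (Unitization ℂ A)) = 0 := ((hmem _).mp i.2).2
      have hsndi : sndC (i : WithLp 1 (Unitization ℂ A)) ∈ I := ((hmem _).mp i.2).1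
      rw [hD'apply, hD'apply, hD'apply]
      have e1 : v ⟨(i : WithLp 1 (Unitization ℂ A)) * x, (hI'ideal x i i.2).2⟩ =
          fstC x • (⟨sndC (i : WithLp 1 (Unitization ℂ A)), hsndi⟩ : ↥I) +
            ⟨sndC (i : WithLp 1 (Unitization ℂ A)) * sndC x, (hI (sndC x) _ hsndi).2⟩ := by
        apply Subtype.ext
        show sndC ((i : WithLp 1 (Unitization ℂ A)) * x) = _
        rw [sndC_mul, hfsti]
        simp
      have e2 : v ⟨y * (i : WithLp 1 (Unitization ℂ A)), (hI'ideal y i i.2).1⟩ =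
          fstC y • (⟨sndC (i : WithLp 1 (Unitization ℂ A)), hsndi⟩ : ↥I) +
            ⟨sndC y * sndC (i : WithLp 1 (Unitization ℂ A)), (hI (sndC y) _ hsndi).1⟩ := by
        apply Subtype.ext
        show sndC (y * (i : WithLp 1 (Unitization ℂ A))) = _
        rw [sndC_mul, hfsti]
        simp [add_comm]
      have e3 : v i = ⟨sndC (i : WithLp 1 (Unitization ℂ A)), hsndi⟩ := rfl
      rw [e1, e2, e3, map_add, map_add, map_smul, map_smul, sndC_mul, map_add, map_add,
        map_smul, map_smul]
      rw [ContinuousLinearMap.add_apply, ContinuousLinearMap.add_apply,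
        ContinuousLinearMap.smul_apply, ContinuousLinearMap.smul_apply]
      rw [hD (sndC x) (sndC y) ⟨sndC (i : WithLp 1 (Unitization ℂ A)), hsndi⟩]
      ring
    obtain ⟨f', hf'⟩ := h I' hI'c hI'ideal D' hD'
    -- transfer the implementing functional back
    set w : ↥I →L[ℂ] ↥I' := (inrC.comp I.subtypeL).codRestrict I'
      (fun j => (hmem _).mpr ⟨by simpa using j.2, by simp⟩) with hwdef
    refine ⟨f'.comp w, ?_⟩
    intro a j
    have key := hf' (inrC a) (w j)
    have hL : D' (inrC a) (w j) = D a j := by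
      have hv : v (w j) = j := Subtype.ext (by simp [hvval, hwdef])
      rw [hD'apply, hv, sndC_inrC]
    rw [hL] at key
    rw [key]
    show f' _ = f' (w _)
    congr 1
    apply Subtype.ext
    show ((w j) : WithLp 1 (Unitization ℂ A)) * inrC a - inrC a * ((w j) : WithLp 1 (Unitization ℂ A)) =
      inrC ((j : A) * a - a * (j : A))
    have hwj : ((w j) : WithLp 1 (Unitization ℂ A)) = inrC (j : A) := rfl
    rw [hwj, map_sub, inrC_mul, inrC_mul]
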